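/- Let $\ell^0_1 \le \dots \le \ell^0_T$ be nonnegative reals, $L \ge 0$, and $t_0 \in \{1,\dots,T\}$ such that $\Delta_{t_0} < L \le \Delta_{t_0+1}$ where $\Delta_t = t\,\ell^0_t - \sum_{s \le t}\ell^0_s$ (with $\Delta_{T+1}=+\infty$). Define $\ell^*_t = (L + \sum_{s\le t_0}\ell^0_s)/t_0 - \ell^0_t$ for $t \le t_0$ and $\ell^*_t = 0$ for $t > t_0$. Then $\ell^*_t \ge 0$ for all $t$ and $\sum_{t=1}^T \ell^*_t = L$, i.e., the water-filling profile is feasible. -/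

import Mathlib

/-- The water-filling profile is feasible: it is nonnegative
and its total equals the charging need `L`. -/
theorem waterfilling_profile_feasible
    (T : ℕ) (hT : 1 ≤ T) (ℓ0 : ℕ → ℝ)
    (hnonneg : ∀ t, 1 ≤ t → t ≤ T → 0 ≤ ℓ0 t)
    (hsorted : ∀ s t, 1 ≤ s → s ≤ t → t ≤ T → ℓ0 s ≤ ℓ0 t)
    (Δ : ℕ → ℝ)
    (hΔ : ∀ t, 1 ≤ t → t ≤ T →
      Δ t = t * ℓ0 t - ∑ s ∈ Finset.Icc 1 t, ℓ0 s)
    (L : ℝ) (hL : 0 ≤ L)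
    (t0 : ℕ) (ht0a : 1 ≤ t0) (ht0b : t0 ≤ T)
    (hlow : Δ t0 < L) (hhigh : t0 < T → L ≤ Δ (t0 + 1))
    (ℓstar : ℕ → ℝ)
    (hℓstar_used : ∀ t, 1 ≤ t → t ≤ t0 →
      ℓstar t = (L + ∑ s ∈ Finset.Icc 1 t0, ℓ0 s) / t0 - ℓ0 t)
    (hℓstar_unused : ∀ t, t0 < t → ℓstar t = 0) :
    (∀ t, 1 ≤ t → t ≤ T → 0 ≤ ℓstar t) ∧
      ∑ t ∈ Finset.Icc 1 T, ℓstar t = L := by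
  have ht0R : (0:ℝ) < (t0 : ℝ) := by exact_mod_cast ht0a
  set S := ∑ s ∈ Finset.Icc 1 t0, ℓ0 s with hS
  have hΔ0 : Δ t0 = t0 * ℓ0 t0 - S := hΔ t0 ht0a ht0b
  have hkey : ℓ0 t0 ≤ (L + S) / t0 := by
    rw [le_div_iff₀ ht0R]
    nlinarith [hlow, hΔ0]
  have hIcc : ∀ n : ℕ, Finset.Icc 1 n = Finset.Ioc 0 n := by
    intro n; ext x; simp [Nat.lt_iff_add_one_le]
  constructor
  · intro t h1 h2
    by_cases h : t ≤ t0
    · rw [hℓstar_used t h1 h]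
      have := hsorted t t0 h1 h ht0b
      linarith
    · rw [hℓstar_unused t (lt_of_not_ge h)]
  · rw [hIcc T, ← Finset.sum_Ioc_consecutive ℓstar (Nat.zero_le t0) ht0b]
    have h2 : ∑ t ∈ Finset.Ioc t0 T, ℓstar t = 0 := by
      apply Finset.sum_eq_zero
      intro x hx
      exact hℓstar_unused x (Finset.mem_Ioc.mp hx).1
    have h1 : ∑ t ∈ Finset.Ioc 0 t0, ℓstar t
        = ∑ t ∈ Finset.Ioc 0 t0, ((L + S) / t0 - ℓ0 t) := by
      apply Finset.sum_congr rfl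
      intro x hx
      obtain ⟨hx1, hx2⟩ := Finset.mem_Ioc.mp hx
      exact hℓstar_used x hx1 hx2
    rw [h1, h2, Finset.sum_sub_distrib, Finset.sum_const, Nat.card_Ioc,
      Nat.sub_zero, ← hIcc t0, ← hS, nsmul_eq_mul]
    field_simp
    ring
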